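/- The moment generating function of the standardized NC(1) distribution satisfies M(t) = (1/(√(2π)·Φ(-√(β/(1-β))))) · ∫_{√(β/(1-β))}^∞ exp(t²/(2(1-β)z²) − z²/2) dz for all real t. -/

import Mathlib

open MeasureTheory Real Set

/-- The standard normal cumulative distribution function. -/
noncomputable def Phi (t : ℝ) : ℝ := ∫ u in Set.Iic t, Real.exp (-u ^ 2 / 2) / Real.sqrt (2 * π)

open Filter Topology

lemma aux1 {c : ℝ} (hc : 0 < c) {a : ℝ} (ha : 0 ≤ a) :
    IntegrableOn (fun z => z * Real.exp (-c * z ^ 2 / 2)) (Ioi a) ∧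
    ∫ z in Ioi a, z * Real.exp (-c * z ^ 2 / 2) = Real.exp (-c * a ^ 2 / 2) / c := by
  have hderiv : ∀ z ∈ Ici a, HasDerivAt (fun z => -Real.exp (-c * z ^ 2 / 2) / c)
      (z * Real.exp (-c * z ^ 2 / 2)) z := by
    intro z _
    have h1 : HasDerivAt (fun z : ℝ => -c * z ^ 2 / 2) (-(c * z)) z := by
      have h := ((hasDerivAt_pow 2 z).const_mul (-c)).div_const 2
      refine h.congr_deriv ?_
      simp
      ring
    have h2 := (h1.exp.neg).div_const c
    refine h2.congr_deriv ?_
    field_simp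
  have hpos : ∀ z ∈ Ioi a, 0 ≤ z * Real.exp (-c * z ^ 2 / 2) := fun z hz =>
    mul_nonneg (ha.trans hz.le) (Real.exp_pos _).le
  have hlim : Tendsto (fun z : ℝ => -Real.exp (-c * z ^ 2 / 2) / c) atTop (𝓝 0) := by
    have h0 : Tendsto (fun z : ℝ => -c * z ^ 2 / 2) atTop atBot := by
      have h1 : Tendsto (fun z : ℝ => c / 2 * z ^ 2) atTop atTop :=
        (tendsto_pow_atTop two_ne_zero).const_mul_atTop (by positivity)
      have h2 := tendsto_neg_atTop_atBot.comp h1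
      refine h2.congr fun z => by simp [Function.comp]; ring
    have h3 := ((Real.tendsto_exp_atBot.comp h0).neg).div_const c
    simpa using h3
  refine ⟨integrableOn_Ioi_deriv_of_nonneg' hderiv hpos hlim, ?_⟩
  rw [integral_Ioi_of_hasDerivAt_of_nonneg' hderiv hpos hlim]
  ring

lemma aux2 {s : ℝ} (hs : 0 < s) (t : ℝ) :
    (Integrable fun x : ℝ => Real.exp (t * x - s * x ^ 2 / 2)) ∧
    ∫ x : ℝ, Real.exp (t * x - s * x ^ 2 / 2)
      = Real.sqrt (2 * π / s) * Real.exp (t ^ 2 / (2 * s)) := by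
  have heq : (fun x : ℝ => Real.exp (t * x - s * x ^ 2 / 2))
      = fun x => Real.exp (-(s / 2) * (x - t / s) ^ 2) * Real.exp (t ^ 2 / (2 * s)) := by
    funext x
    rw [← Real.exp_add]
    congr 1
    field_simp
    ring
  constructor
  · rw [heq]
    exact ((integrable_exp_neg_mul_sq (half_pos hs)).comp_sub_right (t / s)).mul_const _
  · rw [heq, integral_mul_const,
      integral_sub_right_eq_self (fun x => Real.exp (-(s / 2) * x ^ 2)) (t / s),
      integral_gaussian (s / 2)]
    congr 2
    rw [div_div_eq_mul_div, mul_comm π 2]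

lemma Phi_pos (x : ℝ) : 0 < Phi x := by
  unfold Phi
  have hint : Integrable (fun u : ℝ => Real.exp (-u ^ 2 / 2) / Real.sqrt (2 * π)) := by
    have h := (integrable_exp_neg_mul_sq (show (0:ℝ) < 1/2 by norm_num)).div_const
      (Real.sqrt (2 * π))
    have he : (fun u : ℝ => Real.exp (-u ^ 2 / 2) / Real.sqrt (2 * π))
        = fun u => Real.exp (-(1/2 : ℝ) * u ^ 2) / Real.sqrt (2 * π) := by
      funext u; rw [show -u ^ 2 / 2 = -(1/2 : ℝ) * u ^ 2 by ring]
    rw [he]; exact h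
  rw [setIntegral_pos_iff_support_of_nonneg_ae ?_ hint.integrableOn]
  · have hsupp : Function.support (fun u : ℝ => Real.exp (-u ^ 2 / 2) / Real.sqrt (2 * π))
        = univ := by
      refine Set.eq_univ_of_forall fun u => ?_
      have : 0 < Real.exp (-u ^ 2 / 2) / Real.sqrt (2 * π) := by
        have := Real.pi_pos; positivity
      exact this.ne'
    rw [hsupp, univ_inter, Real.volume_Iic]
    simp
  · filter_upwards with u
    have := Real.pi_pos
    positivity

set_option maxHeartbeats 1000000 in
theorem nc1_mgf (β c₁ t : ℝ) (hβ : 0 < β) (hβ1 : β < 1)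
    (hc₁ : c₁ = Real.sqrt (1 - β) * Real.exp (-(β / (2 * (1 - β)))) /
        (2 * π * Phi (-Real.sqrt (β / (1 - β))))) :
    ∫ x : ℝ, Real.exp (t * x) * (c₁ * Real.exp (-(β * x ^ 2) / 2) / (1 + (1 - β) * x ^ 2))
      = (1 / (Real.sqrt (2 * π) * Phi (-Real.sqrt (β / (1 - β))))) *
          ∫ z in Set.Ioi (Real.sqrt (β / (1 - β))),
            Real.exp (t ^ 2 / (2 * (1 - β) * z ^ 2) - z ^ 2 / 2) := by
  have h1β : 0 < 1 - β := by linarith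
  set a := Real.sqrt (β / (1 - β)) with ha_def
  have ha0 : 0 < a := Real.sqrt_pos.mpr (div_pos hβ h1β)
  have ha2 : a ^ 2 = β / (1 - β) := Real.sq_sqrt (div_pos hβ h1β).le
  set S := Phi (-a) with hS_def
  have hS : 0 < S := Phi_pos _
  have hπ : (0:ℝ) < π := Real.pi_pos
  have h2π : Real.sqrt (2 * π) ^ 2 = 2 * π := Real.sq_sqrt (by positivity)
  have hsq2π : (0:ℝ) < Real.sqrt (2 * π) := Real.sqrt_pos.mpr (by positivity)
  have hsβ : Real.sqrt (1 - β) ^ 2 = 1 - β := Real.sq_sqrt h1β.le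
  have hsβ0 : 0 < Real.sqrt (1 - β) := Real.sqrt_pos.mpr h1β
  set D := Real.sqrt (1 - β) / (2 * π * S) with hD_def
  have hD0 : 0 < D := by positivity
  have hP : ∀ x : ℝ, 0 < 1 + (1 - β) * x ^ 2 := fun x => by nlinarith [sq_nonneg x]
  set g : ℝ → ℝ → ℝ := fun x z =>
    (Real.exp (t * x) * D) * (z * Real.exp (-(1 + (1 - β) * x ^ 2) * z ^ 2 / 2)) with hg_def
  -- Step A : z-marginal
  have stepA : ∀ x : ℝ, ∫ z in Ioi a, g x z
      = Real.exp (t * x) * (c₁ * Real.exp (-(β * x ^ 2) / 2) / (1 + (1 - β) * x ^ 2)) := by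
    intro x
    simp only [hg_def]
    rw [MeasureTheory.integral_const_mul, (aux1 (hP x) ha0.le).2]
    have harg : -(1 + (1 - β) * x ^ 2) * a ^ 2 / 2 = -(β / (2 * (1 - β))) + -(β * x ^ 2) / 2 := by
      rw [ha2]; field_simp; ring
    rw [harg, Real.exp_add, hc₁, hD_def]
    field_simp
  -- Step B : x-marginal
  have stepB : ∀ z ∈ Ioi a, (fun z => ∫ x : ℝ, g x z) z
      = (1 / (Real.sqrt (2 * π) * S)) * Real.exp (t ^ 2 / (2 * (1 - β) * z ^ 2) - z ^ 2 / 2) := by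
    intro z hz
    have hz0 : 0 < z := lt_trans ha0 hz
    set s := (1 - β) * z ^ 2 with hs_def
    have hs : 0 < s := by positivity
    have heq : (fun x : ℝ => g x z)
        = fun x => (D * z * Real.exp (-z ^ 2 / 2)) * Real.exp (t * x - s * x ^ 2 / 2) := by
      funext x
      show (Real.exp (t * x) * D) * (z * Real.exp (-(1 + (1 - β) * x ^ 2) * z ^ 2 / 2)) = _
      rw [show -(1 + (1 - β) * x ^ 2) * z ^ 2 / 2 = -z ^ 2 / 2 + -(s * x ^ 2 / 2) by
          rw [hs_def]; ring,
        Real.exp_add,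
        show t * x - s * x ^ 2 / 2 = t * x + -(s * x ^ 2 / 2) by ring, Real.exp_add]
      ring
    simp only []
    rw [heq, MeasureTheory.integral_const_mul, (aux2 hs t).2]
    have hsqrt : Real.sqrt (2 * π / s) = Real.sqrt (2 * π) / (Real.sqrt (1 - β) * z) := by
      rw [show 2 * π / s = (Real.sqrt (2 * π) / (Real.sqrt (1 - β) * z)) ^ 2 by
        rw [div_pow, mul_pow, h2π, hsβ, hs_def]]
      exact Real.sqrt_sq (by positivity)
    rw [hsqrt, show t ^ 2 / (2 * (1 - β) * z ^ 2) - z ^ 2 / 2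
        = t ^ 2 / (2 * s) + -z ^ 2 / 2 by rw [hs_def]; ring, Real.exp_add, hD_def]
    rw [show (2:ℝ) * π = Real.sqrt (2 * π) ^ 2 from h2π.symm] -- danger: nested rewrite?
    field_simp
    ring
    exact Real.sq_sqrt (by positivity)
  -- marginal integrability
  have hmarg : Integrable (fun x : ℝ =>
      Real.exp (t * x) * (c₁ * Real.exp (-(β * x ^ 2) / 2) / (1 + (1 - β) * x ^ 2))) := by
    have hg2 : Integrable (fun x : ℝ => |c₁| * Real.exp (t * x - β * x ^ 2 / 2)) :=
      ((aux2 hβ t).1).const_mul _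
    refine Integrable.mono' hg2 ?_ ?_
    · have hc : Continuous fun x : ℝ =>
          Real.exp (t * x) * (c₁ * Real.exp (-(β * x ^ 2) / 2) / (1 + (1 - β) * x ^ 2)) := by
        apply Continuous.mul (by fun_prop)
        exact Continuous.div (by fun_prop) (by fun_prop) fun x => (hP x).ne'
      exact hc.aestronglyMeasurable
    · filter_upwards with x
      rw [Real.norm_eq_abs, abs_mul, abs_of_pos (Real.exp_pos _), abs_div, abs_mul,
        abs_of_pos (Real.exp_pos _), abs_of_pos (hP x),
        show t * x - β * x ^ 2 / 2 = t * x + -(β * x ^ 2) / 2 by ring, Real.exp_add]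
      have h1 : |c₁| * Real.exp (-(β * x ^ 2) / 2) / (1 + (1 - β) * x ^ 2)
          ≤ |c₁| * Real.exp (-(β * x ^ 2) / 2) :=
        div_le_self (by positivity) (by nlinarith [sq_nonneg x])
      calc Real.exp (t * x) * (|c₁| * Real.exp (-(β * x ^ 2) / 2) / (1 + (1 - β) * x ^ 2))
          ≤ Real.exp (t * x) * (|c₁| * Real.exp (-(β * x ^ 2) / 2)) :=
            mul_le_mul_of_nonneg_left h1 (Real.exp_pos _).le
        _ = |c₁| * (Real.exp (t * x) * Real.exp (-(β * x ^ 2) / 2)) := by ring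
  -- product integrability
  have hGm : AEStronglyMeasurable (fun p : ℝ × ℝ => g p.1 p.2)
      (volume.prod (volume.restrict (Ioi a))) := by
    apply Continuous.aestronglyMeasurable
    simp only [hg_def]
    fun_prop
  have hGint : Integrable (fun p : ℝ × ℝ => g p.1 p.2)
      (volume.prod (volume.restrict (Ioi a))) := by
    rw [MeasureTheory.integrable_prod_iff hGm]
    constructor
    · refine Filter.Eventually.of_forall fun x => ?_
      simp only [hg_def]
      exact ((aux1 (hP x) ha0.le).1.const_mul _)
    · have he : (fun x => ∫ z in Ioi a, ‖g x z‖)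
          = fun x => Real.exp (t * x) * (c₁ * Real.exp (-(β * x ^ 2) / 2)
            / (1 + (1 - β) * x ^ 2)) := by
        funext x
        rw [← stepA x]
        refine setIntegral_congr_fun measurableSet_Ioi fun z hz => ?_
        rw [Real.norm_eq_abs, abs_of_nonneg]
        exact mul_nonneg (by positivity)
          (mul_nonneg (ha0.trans hz).le (Real.exp_pos _).le)
      rw [he]
      exact hmarg
  -- chain
  calc ∫ x : ℝ, Real.exp (t * x) * (c₁ * Real.exp (-(β * x ^ 2) / 2) / (1 + (1 - β) * x ^ 2))
      = ∫ x : ℝ, ∫ z in Ioi a, g x z :=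
        integral_congr_ae (Filter.Eventually.of_forall fun x => (stepA x).symm)
    _ = ∫ z in Ioi a, ∫ x : ℝ, g x z := MeasureTheory.integral_integral_swap hGint
    _ = ∫ z in Ioi a, (1 / (Real.sqrt (2 * π) * S))
          * Real.exp (t ^ 2 / (2 * (1 - β) * z ^ 2) - z ^ 2 / 2) :=
        setIntegral_congr_fun measurableSet_Ioi stepB
    _ = (1 / (Real.sqrt (2 * π) * S)) *
          ∫ z in Ioi a, Real.exp (t ^ 2 / (2 * (1 - β) * z ^ 2) - z ^ 2 / 2) :=
        MeasureTheory.integral_const_mul _ _
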